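/- (Equivalence of inverse harmonicity and the elliptic-grid-generation equations) Let Ω̂, Ω ⊂ ℝ² be open sets and let x : Ω̂ → Ω be a C² diffeomorphism whose Jacobian determinant det J(x)(ξ) is strictly positive for every ξ ∈ Ω̂. Then both components of the inverse map x⁻¹ : Ω → Ω̂ are harmonic on Ω (Δ(x⁻¹)ᵢ = 0 on Ω for i = 1, 2) if and only if x satisfies the quasilinear second-order nondivergence-form equations: for i ∈ {1, 2} and all ξ ∈ Ω̂, A(∂x)(ξ) : H(xᵢ)(ξ) = 0, where H(xᵢ) denotes the Hessian matrix of second partial derivatives of the component xᵢ with respect to ξ. -/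

import Mathlib

open Matrix

/-- The Jacobian matrix of a map `x : ℝ² → ℝ²` at a point. -/
noncomputable def jacMat (x : (Fin 2 → ℝ) → (Fin 2 → ℝ)) (ξ : Fin 2 → ℝ) :
    Matrix (Fin 2) (Fin 2) ℝ :=
  Matrix.of fun i j => fderiv ℝ (fun q => x q i) ξ (Pi.single j 1)

/-- The Hessian matrix of a scalar function at a point. -/
noncomputable def hessMat (f : (Fin 2 → ℝ) → ℝ) (p : Fin 2 → ℝ) :
    Matrix (Fin 2) (Fin 2) ℝ :=
  Matrix.of fun i j => fderiv ℝ (fun q => fderiv ℝ f q (Pi.single i 1)) p (Pi.single j 1)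

/-- The matrix `A(J) = [[g₂₂, −g₁₂], [−g₁₂, g₁₁]]` built from the metric tensor `G = JᵀJ`. -/
def Amat (J : Matrix (Fin 2) (Fin 2) ℝ) : Matrix (Fin 2) (Fin 2) ℝ :=
  !![(Jᵀ * J) 1 1, -((Jᵀ * J) 0 1); -((Jᵀ * J) 0 1), (Jᵀ * J) 0 0]

/-- The Frobenius inner product of two `2×2` matrices. -/
def frobInner (M N : Matrix (Fin 2) (Fin 2) ℝ) : ℝ :=
  ∑ i, ∑ j, M i j * N i j

private lemma clm_decomp (L : (Fin 2 → ℝ) →L[ℝ] ℝ) (v : Fin 2 → ℝ) :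
    L v = ∑ a : Fin 2, v a * L (Pi.single a 1) := by
  have hv : v = v 0 • (Pi.single 0 1 : Fin 2 → ℝ) + v 1 • (Pi.single 1 1 : Fin 2 → ℝ) := by
    funext j; fin_cases j <;> simp
  rw [Fin.sum_univ_two]
  conv_lhs => rw [hv]
  simp [smul_eq_mul]

private lemma fderiv_comp_component (x : (Fin 2 → ℝ) → (Fin 2 → ℝ)) {ξ : Fin 2 → ℝ}
    (hx : DifferentiableAt ℝ x ξ) (b : Fin 2) (v : Fin 2 → ℝ) :
    fderiv ℝ (fun q => x q b) ξ v = fderiv ℝ x ξ v b := by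
  have h := fderiv_pi (𝕜 := ℝ) (φ := fun i q => x q i) (x := ξ)
    (fun i => differentiableAt_pi.mp hx i)
  rw [show (fun q (i : Fin 2) => x q i) = x from rfl] at h
  rw [h]
  rfl

private lemma trace_identity (J H : Matrix (Fin 2) (Fin 2) ℝ) :
    (H 0 0 + H 1 1) * J.det ^ 2
      = ∑ j : Fin 2, ∑ k : Fin 2, (Jᵀ * H * J) j k * Amat J j k := by
  simp [Matrix.det_fin_two, Amat, Matrix.mul_apply, Fin.sum_univ_two,
    Matrix.transpose_apply]
  ring

section Main

variable (Ωhat Ω : Set (Fin 2 → ℝ)) (x y : (Fin 2 → ℝ) → (Fin 2 → ℝ))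

private lemma stepA (hΩhat_open : IsOpen Ωhat) (hΩ_open : IsOpen Ω)
    (hx : ContDiffOn ℝ 2 x Ωhat) (hy : ContDiffOn ℝ 2 y Ω)
    (hbij : Set.BijOn x Ωhat Ω)
    (hinv_left : ∀ ξ ∈ Ωhat, y (x ξ) = ξ)
    {ξ : Fin 2 → ℝ} (hξ : ξ ∈ Ωhat) :
    jacMat y (x ξ) * jacMat x ξ = 1 := by
  have hp : x ξ ∈ Ω := hbij.mapsTo hξ
  have hxd : DifferentiableAt ℝ x ξ :=
    (hx.contDiffAt (hΩhat_open.mem_nhds hξ)).differentiableAt two_ne_zero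
  ext i j
  have hyi : DifferentiableAt ℝ (fun q => y q i) (x ξ) :=
    (contDiffAt_pi.mp (hy.contDiffAt (hΩ_open.mem_nhds hp)) i).differentiableAt two_ne_zero
  have hcomp : (fun q => y (x q) i) =ᶠ[nhds ξ] (fun q => q i) := by
    filter_upwards [hΩhat_open.mem_nhds hξ] with q hq
    rw [hinv_left q hq]
  have h1 : fderiv ℝ (fun q => y (x q) i) ξ = fderiv ℝ (fun q : Fin 2 → ℝ => q i) ξ :=
    hcomp.fderiv_eq
  have h2 : fderiv ℝ (fun q : Fin 2 → ℝ => q i) ξ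
      = (ContinuousLinearMap.proj i : (Fin 2 → ℝ) →L[ℝ] ℝ) :=
    (ContinuousLinearMap.proj i : (Fin 2 → ℝ) →L[ℝ] ℝ).fderiv
  have h4 : fderiv ℝ (fun q => y (x q) i) ξ
      = (fderiv ℝ (fun p => y p i) (x ξ)).comp (fderiv ℝ x ξ) := by
    exact fderiv_comp (g := fun p => y p i) ξ hyi hxd
  have key := congrArg (fun L : (Fin 2 → ℝ) →L[ℝ] ℝ => L (Pi.single j 1))
    (h4.symm.trans (h1.trans h2))
  simp only [ContinuousLinearMap.comp_apply, ContinuousLinearMap.proj_apply] at key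
  rw [clm_decomp] at key
  have hent : ∀ a : Fin 2,
      fderiv ℝ x ξ (Pi.single j 1) a * fderiv ℝ (fun p => y p i) (x ξ) (Pi.single a 1)
        = jacMat y (x ξ) i a * jacMat x ξ a j := by
    intro a
    rw [← fderiv_comp_component x hxd a]
    simp only [jacMat, Matrix.of_apply]
    ring
  rw [Finset.sum_congr rfl (fun a _ => hent a)] at key
  rw [Matrix.mul_apply, key, Matrix.one_apply, Pi.single_apply]

private lemma key_identity (hΩhat_open : IsOpen Ωhat) (hΩ_open : IsOpen Ω)
    (hx : ContDiffOn ℝ 2 x Ωhat) (hy : ContDiffOn ℝ 2 y Ω)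
    (hbij : Set.BijOn x Ωhat Ω)
    (hinv_left : ∀ ξ ∈ Ωhat, y (x ξ) = ξ)
    {ξ : Fin 2 → ℝ} (hξ : ξ ∈ Ωhat) (i : Fin 2) :
    (∑ a : Fin 2, hessMat (fun q => y q i) (x ξ) a a) * (jacMat x ξ).det ^ 2
      = - ∑ a : Fin 2, jacMat y (x ξ) i a *
          frobInner (Amat (jacMat x ξ)) (hessMat (fun q => x q a) ξ) := by
  have hp : x ξ ∈ Ω := hbij.mapsTo hξ
  have hxd : DifferentiableAt ℝ x ξ :=
    (hx.contDiffAt (hΩhat_open.mem_nhds hξ)).differentiableAt two_ne_zero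
  set J := jacMat x ξ with hJ
  set K := jacMat y (x ξ) with hK
  set Hy := hessMat (fun q => y q i) (x ξ) with hHy
  -- differentiability of the first-derivative maps
  have hφ : ∀ a : Fin 2, DifferentiableAt ℝ
      (fun r => fderiv ℝ (fun s => y s i) r (Pi.single a 1)) (x ξ) := by
    intro a
    have h2 : ContDiffAt ℝ 2 (fun s => y s i) (x ξ) :=
      contDiffAt_pi.mp (hy.contDiffAt (hΩ_open.mem_nhds hp)) i
    have h1 : ContDiffAt ℝ 1 (fderiv ℝ (fun s => y s i)) (x ξ) :=
      h2.fderiv_right (by norm_num)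
    exact ((ContinuousLinearMap.apply ℝ ℝ (Pi.single a 1)).differentiableAt).comp (x ξ)
      (h1.differentiableAt one_ne_zero)
  have hG : ∀ a j : Fin 2, DifferentiableAt ℝ
      (fun q => fderiv ℝ (fun r => x r a) q (Pi.single j 1)) ξ := by
    intro a j
    have h2 : ContDiffAt ℝ 2 (fun r => x r a) ξ :=
      contDiffAt_pi.mp (hx.contDiffAt (hΩhat_open.mem_nhds hξ)) a
    have h1 : ContDiffAt ℝ 1 (fderiv ℝ (fun r => x r a)) ξ :=
      h2.fderiv_right (by norm_num)
    exact ((ContinuousLinearMap.apply ℝ ℝ (Pi.single j 1)).differentiableAt).comp ξ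
      (h1.differentiableAt one_ne_zero)
  -- Step B: the differentiated identity
  have hstep : ∀ j k : Fin 2,
      (Jᵀ * Hy * J) j k
        + ∑ a : Fin 2, K i a * hessMat (fun q => x q a) ξ j k = 0 := by
    intro j k
    set h : (Fin 2 → ℝ) → ℝ := fun q =>
      ∑ a : Fin 2, (fderiv ℝ (fun r => y r i) (x q) (Pi.single a 1))
        * (fderiv ℝ (fun r => x r a) q (Pi.single j 1)) with hh
    -- h is eventually constant
    have hconst : h =ᶠ[nhds ξ] (fun _ => (1 : Matrix (Fin 2) (Fin 2) ℝ) i j) := by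
      filter_upwards [hΩhat_open.mem_nhds hξ] with q hq
      have := stepA Ωhat Ω x y hΩhat_open hΩ_open hx hy hbij hinv_left hq
      have := congrFun (congrFun this i) j
      rw [Matrix.mul_apply] at this
      simpa [hh, jacMat] using this
    have hderiv0 : fderiv ℝ h ξ (Pi.single k 1) = 0 := by
      rw [hconst.fderiv_eq, fderiv_fun_const]
      simp
    -- differentiability of each summand's factors
    have hFa : ∀ a : Fin 2, DifferentiableAt ℝ
        (fun q => fderiv ℝ (fun r => y r i) (x q) (Pi.single a 1)) ξ :=
      fun a => (hφ a).comp ξ hxd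
    -- compute the derivative of h
    have hsum : fderiv ℝ h ξ = ∑ a : Fin 2, fderiv ℝ
        (fun q => (fderiv ℝ (fun r => y r i) (x q) (Pi.single a 1))
          * (fderiv ℝ (fun r => x r a) q (Pi.single j 1))) ξ := by
      rw [hh]
      exact fderiv_fun_sum (fun a _ => ((hFa a).mul (hG a j)))
    have hmul : ∀ a : Fin 2, fderiv ℝ
        (fun q => (fderiv ℝ (fun r => y r i) (x q) (Pi.single a 1))
          * (fderiv ℝ (fun r => x r a) q (Pi.single j 1))) ξ (Pi.single k 1)
      = K i a * hessMat (fun q => x q a) ξ j k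
        + J a j * ∑ b : Fin 2, J b k * Hy a b := by
      intro a
      have hchain : fderiv ℝ
          (fun q => fderiv ℝ (fun r => y r i) (x q) (Pi.single a 1)) ξ (Pi.single k 1)
          = ∑ b : Fin 2, J b k * Hy a b := by
        have hc : fderiv ℝ
            (fun q => fderiv ℝ (fun r => y r i) (x q) (Pi.single a 1)) ξ
            = (fderiv ℝ (fun r => fderiv ℝ (fun s => y s i) r (Pi.single a 1)) (x ξ)).comp
                (fderiv ℝ x ξ) :=
          fderiv_comp (g := fun r => fderiv ℝ (fun s => y s i) r (Pi.single a 1)) ξ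
            (hφ a) hxd
        rw [hc]
        simp only [ContinuousLinearMap.comp_apply]
        rw [clm_decomp]
        refine Finset.sum_congr rfl fun b _ => ?_
        rw [← fderiv_comp_component x hxd b]
        simp only [hHy, hJ, hessMat, jacMat, Matrix.of_apply]
      rw [fderiv_fun_mul (hFa a) (hG a j)]
      simp only [ContinuousLinearMap.add_apply, ContinuousLinearMap.smul_apply,
        smul_eq_mul]
      rw [hchain]
      simp only [hK, hJ, hessMat, jacMat, Matrix.of_apply]
      try ring
    have := hderiv0
    rw [hsum] at this
    simp only [ContinuousLinearMap.sum_apply] at this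
    rw [Finset.sum_congr rfl (fun a _ => hmul a)] at this
    rw [Matrix.mul_apply]
    simp only [Matrix.mul_apply, Matrix.transpose_apply, Fin.sum_univ_two] at this ⊢
    linear_combination this
  -- assemble
  rw [Fin.sum_univ_two]
  rw [trace_identity J Hy]
  have e00 := hstep 0 0
  have e01 := hstep 0 1
  have e10 := hstep 1 0
  have e11 := hstep 1 1
  simp only [Fin.sum_univ_two] at e00 e01 e10 e11 ⊢
  simp only [frobInner, Fin.sum_univ_two]
  linear_combination (Amat J 0 0) * e00 + (Amat J 0 1) * e01
    + (Amat J 1 0) * e10 + (Amat J 1 1) * e11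

end Main

theorem inverse_harmonicity_iff_EGG
    (Ωhat Ω : Set (Fin 2 → ℝ)) (hΩhat_open : IsOpen Ωhat) (hΩ_open : IsOpen Ω)
    (x y : (Fin 2 → ℝ) → (Fin 2 → ℝ))
    (hx : ContDiffOn ℝ 2 x Ωhat) (hy : ContDiffOn ℝ 2 y Ω)
    (hbij : Set.BijOn x Ωhat Ω)
    (hinv_left : ∀ ξ ∈ Ωhat, y (x ξ) = ξ) (hinv_right : ∀ p ∈ Ω, x (y p) = p)
    (hdet : ∀ ξ ∈ Ωhat, 0 < (jacMat x ξ).det) :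
    (∀ i : Fin 2, ∀ p ∈ Ω, ∑ a : Fin 2, hessMat (fun q => y q i) p a a = 0)
      ↔ (∀ i : Fin 2, ∀ ξ ∈ Ωhat,
          frobInner (Amat (jacMat x ξ)) (hessMat (fun q => x q i) ξ) = 0) := by
  constructor
  · intro hharm i ξ hξ
    set v : Fin 2 → ℝ := fun a =>
      frobInner (Amat (jacMat x ξ)) (hessMat (fun q => x q a) ξ) with hv
    have hmul : ∀ i' : Fin 2, ∑ a : Fin 2, jacMat y (x ξ) i' a * v a = 0 := by
      intro i'
      have hkey := key_identity Ωhat Ω x y hΩhat_open hΩ_open hx hy hbij hinv_left hξ i'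
      rw [hharm i' (x ξ) (hbij.mapsTo hξ), zero_mul] at hkey
      linarith [hkey]
    have hKJ := stepA Ωhat Ω x y hΩhat_open hΩ_open hx hy hbij hinv_left hξ
    have hJK : jacMat x ξ * jacMat y (x ξ) = 1 := mul_eq_one_comm.mp hKJ
    have hKv : (jacMat y (x ξ)).mulVec v = 0 := by
      funext i'
      simpa [Matrix.mulVec, dotProduct] using hmul i'
    have hv0 : v = 0 := by
      calc v = (1 : Matrix (Fin 2) (Fin 2) ℝ).mulVec v := by simp
        _ = (jacMat x ξ * jacMat y (x ξ)).mulVec v := by rw [hJK]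
        _ = (jacMat x ξ).mulVec ((jacMat y (x ξ)).mulVec v) := by
            rw [Matrix.mulVec_mulVec]
        _ = 0 := by rw [hKv]; simp
    exact congrFun hv0 i
  · intro hEGG i p hp
    obtain ⟨ξ, hξ, rfl⟩ := hbij.surjOn hp
    have hkey := key_identity Ωhat Ω x y hΩhat_open hΩ_open hx hy hbij hinv_left hξ i
    have hz : ∀ a : Fin 2,
        frobInner (Amat (jacMat x ξ)) (hessMat (fun q => x q a) ξ) = 0 :=
      fun a => hEGG a ξ hξ
    simp only [hz, mul_zero] at hkey
    have hd := (hdet ξ hξ).ne'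
    have : (∑ a : Fin 2, hessMat (fun q => y q i) (x ξ) a a) * (jacMat x ξ).det ^ 2 = 0 := by
      rw [hkey]; simp
    exact (mul_eq_zero.mp this).resolve_right (pow_ne_zero 2 hd)
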